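/- If A is an n×n real matrix and B is an n×k real matrix satisfying the Kalman condition rk[B, AB, A²B, …, A^{n-1}B] = n, then for every t > 0 the controllability Gramian Γ_t = ∫₀ᵗ e^{-τA} B B* e^{-τA*} dτ is invertible. -/

import Mathlib

open Matrix

/-- The controllability Gramian `Γ_t = ∫₀ᵗ e^{-τA} B Bᵀ e^{-τAᵀ} dτ` (entrywise integral). -/
noncomputable def Gram {n k : ℕ} (A : Matrix (Fin n) (Fin n) ℝ) (B : Matrix (Fin n) (Fin k) ℝ)
    (t : ℝ) : Matrix (Fin n) (Fin n) ℝ :=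
  fun i j => ∫ τ in (0:ℝ)..t,
    (NormedSpace.exp (-τ • A) * B * Bᵀ * NormedSpace.exp (-τ • Aᵀ)) i j

section Aux

open NormedSpace

attribute [local instance] Matrix.linftyOpNormedRing Matrix.linftyOpNormedAlgebra

lemma expM_continuous {n : ℕ} (A : Matrix (Fin n) (Fin n) ℝ) :
    Continuous (fun τ : ℝ => exp (-τ • A)) :=
  exp_continuous.comp (continuous_neg.smul continuous_const)

lemma expM_hasDerivAt {n : ℕ} (A : Matrix (Fin n) (Fin n) ℝ) (τ : ℝ) :
    HasDerivAt (fun τ : ℝ => exp (-τ • A)) (-(A * exp (-τ • A))) τ := by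
  have h := (hasDerivAt_exp_smul_const' (𝕂 := ℝ) A (-τ)).scomp τ (hasDerivAt_neg τ)
  rw [Function.comp_def] at h
  simp only [neg_smul, smul_neg, neg_neg, one_smul] at h ⊢
  exact h

lemma entry_cont {n k : ℕ} (A : Matrix (Fin n) (Fin n) ℝ) (B : Matrix (Fin n) (Fin k) ℝ)
    (i j : Fin n) :
    Continuous (fun τ : ℝ => (exp (-τ • A) * B * Bᵀ * exp (-τ • Aᵀ)) i j) :=
  Continuous.matrix_elem
    ((((expM_continuous A).matrix_mul continuous_const).matrix_mul continuous_const).matrix_mul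
      (expM_continuous Aᵀ)) i j

lemma mulVec_exp_hasDerivAt {n k : ℕ} (A : Matrix (Fin n) (Fin n) ℝ)
    (C : Matrix (Fin k) (Fin n) ℝ) (x : Fin n → ℝ) (τ : ℝ) :
    HasDerivAt (fun τ : ℝ => C *ᵥ (exp (-τ • A) *ᵥ x))
      (-((C * A) *ᵥ (exp (-τ • A) *ᵥ x))) τ := by
  let L : Matrix (Fin n) (Fin n) ℝ →ₗ[ℝ] (Fin k → ℝ) :=
    { toFun := fun M => C *ᵥ (M *ᵥ x)
      map_add' := by intro M N; simp [Matrix.add_mulVec, Matrix.mulVec_add]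
      map_smul' := by intro c M; simp [Matrix.smul_mulVec, Matrix.mulVec_smul] }
  have h := (LinearMap.toContinuousLinearMap L).hasFDerivAt.comp_hasDerivAt τ
    (expM_hasDerivAt A τ)
  have h2 : L (-(A * exp (-τ • A))) = -((C * A) *ᵥ (exp (-τ • A) *ᵥ x)) := by
    show C *ᵥ ((-(A * exp (-τ • A))) *ᵥ x) = _
    simp [Matrix.neg_mulVec, Matrix.mulVec_neg, Matrix.mulVec_mulVec, Matrix.mul_assoc]
  have h' : HasDerivAt (fun τ : ℝ => C *ᵥ (exp (-τ • A) *ᵥ x))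
      (L (-(A * exp (-τ • A)))) τ := h
  rw [h2] at h'
  exact h'

/-- The transpose identity for the exponential factor. -/
lemma expM_transpose {n : ℕ} (A : Matrix (Fin n) (Fin n) ℝ) (τ : ℝ) :
    (exp (-τ • A))ᵀ = exp (-τ • Aᵀ) := by
  rw [← Matrix.exp_transpose, Matrix.transpose_smul]

lemma expM_inv_mulVec {n : ℕ} (A : Matrix (Fin n) (Fin n) ℝ) (τ : ℝ) (x : Fin n → ℝ) :
    exp (τ • A) *ᵥ (exp (-τ • A) *ᵥ x) = x := by
  rw [Matrix.mulVec_mulVec, ← Matrix.exp_add_of_commute _ _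
    (((Commute.refl A).smul_left τ).smul_right (-τ))]
  simp

end Aux

open NormedSpace MeasureTheory intervalIntegral Set

set_option maxHeartbeats 1000000

/-- under the Kalman condition, the Gramian is invertible for every `t > 0`. -/
theorem gramian_isUnit_of_kalman {n k : ℕ} (hk : 1 ≤ k) (hkn : k ≤ n)
    (A : Matrix (Fin n) (Fin n) ℝ) (B : Matrix (Fin n) (Fin k) ℝ)
    (hKalman : Submodule.span ℝ
      {v : Fin n → ℝ | ∃ j < n, ∃ x : Fin k → ℝ, v = (A ^ j * B) *ᵥ x} = ⊤)
    (t : ℝ) (ht : 0 < t) : IsUnit (Gram A B t) := by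
  classical
  rw [Matrix.isUnit_iff_isUnit_det, isUnit_iff_ne_zero]
  intro hdet
  obtain ⟨x, hx0, hGx⟩ := Matrix.exists_mulVec_eq_zero_iff.mpr hdet
  -- notation
  set M : ℝ → Matrix (Fin n) (Fin n) ℝ :=
    fun τ => exp (-τ • A) * B * Bᵀ * exp (-τ • Aᵀ) with hM
  set f : ℝ → Fin k → ℝ := fun τ => (exp (-τ • A) * B)ᵀ *ᵥ x with hf
  set g : ℝ → ℝ := fun τ => ∑ i, (f τ i)^2 with hg
  have hint : ∀ i j, IntervalIntegrable (fun τ => M τ i j) volume 0 t :=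
    fun i j => (entry_cont A B i j).intervalIntegrable 0 t
  -- the quadratic form of the integrand is a sum of squares
  have hCt : ∀ τ : ℝ, (exp (-τ • A) * B)ᵀ = Bᵀ * exp (-τ • Aᵀ) := by
    intro τ; rw [Matrix.transpose_mul, expM_transpose]
  have hquad : ∀ τ, x ⬝ᵥ (M τ *ᵥ x) = g τ := by
    intro τ
    have hM2 : M τ = (exp (-τ • A) * B) * (exp (-τ • A) * B)ᵀ := by
      rw [hCt τ]
      show exp (-τ • A) * B * Bᵀ * exp (-τ • Aᵀ) = _
      rw [Matrix.mul_assoc]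
    rw [hM2, ← Matrix.mulVec_mulVec, Matrix.dotProduct_mulVec, ← Matrix.mulVec_transpose]
    simp only [hg, hf, dotProduct, sq]
  -- pulling the quadratic form through the integral
  have hxGx : x ⬝ᵥ (Gram A B t *ᵥ x) = ∫ τ in (0:ℝ)..t, g τ := by
    have e1 : x ⬝ᵥ (Gram A B t *ᵥ x)
        = ∑ i, x i * ∑ j, (∫ τ in (0:ℝ)..t, M τ i j) * x j := rfl
    rw [e1]
    have e2 : ∀ i j, (∫ τ in (0:ℝ)..t, M τ i j) * x j
        = ∫ τ in (0:ℝ)..t, M τ i j * x j := fun i j =>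
      (intervalIntegral.integral_mul_const (x j) (fun τ => M τ i j)).symm
    have e3 : ∀ i, ∑ j, (∫ τ in (0:ℝ)..t, M τ i j) * x j
        = ∫ τ in (0:ℝ)..t, ∑ j, M τ i j * x j := by
      intro i
      simp_rw [e2]
      exact (intervalIntegral.integral_finset_sum
        (fun j _ => (hint i j).mul_const (x j))).symm
    simp_rw [e3]
    have e4 : ∀ i, x i * ∫ τ in (0:ℝ)..t, ∑ j, M τ i j * x j
        = ∫ τ in (0:ℝ)..t, x i * ∑ j, M τ i j * x j := fun i =>
      (intervalIntegral.integral_const_mul (x i) _).symm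
    simp_rw [e4]
    have e5 : ∑ i, ∫ τ in (0:ℝ)..t, x i * ∑ j, M τ i j * x j
        = ∫ τ in (0:ℝ)..t, ∑ i, x i * ∑ j, M τ i j * x j :=
      (intervalIntegral.integral_finset_sum (f := fun i τ => x i * ∑ j, M τ i j * x j) (fun i _ =>
        (Continuous.intervalIntegrable (continuous_const.mul (continuous_finset_sum _
          (fun j _ => (entry_cont A B i j).mul continuous_const))) 0 t))).symm
    rw [e5]
    exact intervalIntegral.integral_congr (fun τ _ => hquad τ)
  have hg_nonneg : ∀ τ, 0 ≤ g τ := fun τ => Finset.sum_nonneg fun i _ => sq_nonneg _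
  have hf_cont : ∀ i, Continuous (fun τ => f τ i) := by
    intro i
    have : Continuous (fun τ : ℝ => (exp (-τ • A) * B)ᵀ *ᵥ x) :=
      (((expM_continuous A).matrix_mul continuous_const).matrix_transpose).matrix_mulVec
        continuous_const
    exact (continuous_apply i).comp this
  have hg_cont : Continuous g :=
    continuous_finset_sum _ fun i _ => ((hf_cont i).pow 2)
  have hint0 : ∫ τ in (0:ℝ)..t, g τ = 0 := by
    rw [← hxGx, hGx]; simp
  -- g vanishes on (0, t)
  have hgzero : ∀ τ ∈ Ioo (0:ℝ) t, g τ = 0 := by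
    rw [intervalIntegral.integral_of_le ht.le] at hint0
    have hae : g =ᵐ[volume.restrict (Ioc (0:ℝ) t)] 0 := by
      refine (MeasureTheory.integral_eq_zero_iff_of_nonneg_ae ?_ ?_).mp hint0
      · exact Filter.Eventually.of_forall hg_nonneg
      · exact (hg_cont.integrableOn_Ioc)
    have hae' : ∀ᵐ τ ∂(volume : Measure ℝ), τ ∈ Ioc (0:ℝ) t → g τ = 0 :=
      (MeasureTheory.ae_restrict_iff' measurableSet_Ioc).mp hae
    intro τ₀ hτ₀
    by_contra hne
    have hpos : 0 < g τ₀ := (hg_nonneg τ₀).lt_of_ne (Ne.symm hne)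
    set U : Set ℝ := Ioo 0 t ∩ g ⁻¹' Ioi 0 with hU
    have hUopen : IsOpen U := isOpen_Ioo.inter (isOpen_Ioi.preimage hg_cont)
    have hUne : U.Nonempty := ⟨τ₀, hτ₀, hpos⟩
    have hU0 : volume U = 0 := by
      refine measure_mono_null ?_ (MeasureTheory.ae_iff.mp hae')
      rintro τ ⟨hτIoo, hgτ⟩
      simp only [Set.mem_setOf_eq, Classical.not_imp]
      exact ⟨⟨hτIoo.1, hτIoo.2.le⟩, ne_of_gt hgτ⟩
    exact absurd hU0 (hUopen.measure_pos volume hUne).ne'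
  -- hence f vanishes on (0, t)
  have hfzero : ∀ τ ∈ Ioo (0:ℝ) t, f τ = 0 := by
    intro τ hτ
    funext i
    have h := hgzero τ hτ
    have := (Finset.sum_eq_zero_iff_of_nonneg (fun i _ => sq_nonneg (f τ i))).mp h i
      (Finset.mem_univ i)
    exact pow_eq_zero_iff (by norm_num) |>.mp this
  -- the iterated derivatives vanish on (0, t)
  set F : ℕ → ℝ → (Fin k → ℝ) :=
    fun j τ => (A ^ j * B)ᵀ *ᵥ (exp (-τ • Aᵀ) *ᵥ x) with hF
  have hF0 : ∀ τ ∈ Ioo (0:ℝ) t, F 0 τ = 0 := by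
    intro τ hτ
    have h1 : (Bᵀ * exp (-τ • Aᵀ)) *ᵥ x = 0 := by
      rw [← hCt τ]; exact hfzero τ hτ
    show (A ^ 0 * B)ᵀ *ᵥ (exp (-τ • Aᵀ) *ᵥ x) = 0
    rw [Matrix.mulVec_mulVec, pow_zero, Matrix.one_mul]
    exact h1
  have hFderiv : ∀ j τ, HasDerivAt (F j) (-(F (j+1) τ)) τ := by
    intro j τ
    have h := mulVec_exp_hasDerivAt Aᵀ ((A ^ j * B)ᵀ) x τ
    have e : (A ^ j * B)ᵀ * Aᵀ = (A ^ (j+1) * B)ᵀ := by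
      rw [← Matrix.transpose_mul, ← Matrix.mul_assoc, ← pow_succ']
    rw [e] at h
    exact h
  have hFall : ∀ j, ∀ τ ∈ Ioo (0:ℝ) t, F j τ = 0 := by
    intro j
    induction j with
    | zero => exact hF0
    | succ j ih =>
      intro τ hτ
      have hev : F j =ᶠ[nhds τ] (fun _ => (0 : Fin k → ℝ)) :=
        Filter.eventuallyEq_of_mem (isOpen_Ioo.mem_nhds hτ) ih
      have h1 : HasDerivAt (F j) 0 τ :=
        (hasDerivAt_const τ (0 : Fin k → ℝ)).congr_of_eventuallyEq hev
      have h2 := hFderiv j τ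
      have := h2.unique h1
      simpa [neg_eq_zero] using this
  -- conclude
  set τ₀ : ℝ := t / 2 with hτ₀def
  have hτ₀mem : τ₀ ∈ Ioo (0:ℝ) t := ⟨by positivity, by linarith⟩
  set y : Fin n → ℝ := exp (-τ₀ • Aᵀ) *ᵥ x with hy
  have hFy : ∀ j, (A ^ j * B)ᵀ *ᵥ y = 0 := fun j => hFall j τ₀ hτ₀mem
  have horth : ∀ v ∈ Submodule.span ℝ
      {v : Fin n → ℝ | ∃ j < n, ∃ z : Fin k → ℝ, v = (A ^ j * B) *ᵥ z}, y ⬝ᵥ v = 0 := by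
    intro v hv
    induction hv using Submodule.span_induction with
    | mem v hv =>
      obtain ⟨j, hj, z, rfl⟩ := hv
      rw [Matrix.dotProduct_mulVec, ← Matrix.mulVec_transpose, hFy j, zero_dotProduct]
    | zero => simp
    | add u v _ _ hu hv => rw [dotProduct_add, hu, hv, add_zero]
    | smul c v _ hv => rw [dotProduct_smul, hv, smul_zero]
  have hy0 : y = 0 := by
    have : y ⬝ᵥ y = 0 := horth y (by rw [hKalman]; trivial)
    exact dotProduct_self_eq_zero.mp this
  have hx : x = 0 := by
    have := expM_inv_mulVec Aᵀ τ₀ x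
    rw [← hy, hy0, Matrix.mulVec_zero] at this
    exact this.symm
  exact hx0 hx
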